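/- Let m ≥ 2 and suppose ρ is a rational number with 1 < ρ < m/(m−1) that is NOT of the form 1 + 1/(m − 1 + b/a) for any natural numbers a ≥ 1 and 1 ≤ b ≤ m. Then for all natural numbers t ≥ 2 and v_1, …, v_t with 1 ≤ v_i ≤ m − 1, setting S = v_1 + ⋯ + v_t, one has (S + t)/(1 + S) ≠ ρ. -/

import Mathlib

theorem stmt16 (m : ℕ) (hm : 2 ≤ m) (ρ : ℚ) (h1 : 1 < ρ)
    (h2 : ρ < (m : ℚ) / ((m : ℚ) - 1))
    (hnot : ¬ ∃ a b : ℕ, 1 ≤ a ∧ 1 ≤ b ∧ b ≤ m ∧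
      ρ = 1 + 1 / (((m : ℚ) - 1) + (b : ℚ) / a)) :
    ∀ t : ℕ, 2 ≤ t → ∀ v : Fin t → ℕ, (∀ i, 1 ≤ v i ∧ v i ≤ m - 1) →
      (((∑ i, v i : ℕ) : ℚ) + t) / (1 + ((∑ i, v i : ℕ) : ℚ)) ≠ ρ := by
  intro t ht v hv heq
  apply hnot
  obtain ⟨t', rfl⟩ : ∃ t', t = t' + 1 := ⟨t - 1, by omega⟩
  set S := ∑ i, v i with hSdef
  have hSt : (t' + 1) ≤ S := by
    calc t' + 1 = ∑ _i : Fin (t' + 1), 1 := by simp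
    _ ≤ S := Finset.sum_le_sum fun i _ => (hv i).1
  have hSub : S ≤ (t' + 1) * (m - 1) := by
    calc S ≤ ∑ _i : Fin (t' + 1), (m - 1) := Finset.sum_le_sum fun i _ => (hv i).2
    _ = (t' + 1) * (m - 1) := by simp [mul_comm]
  have hpos : (0:ℚ) < 1 + (S:ℚ) := by positivity
  have hm1 : (0:ℚ) < (m:ℚ) - 1 := by
    have : (2:ℚ) ≤ m := by exact_mod_cast hm
    linarith
  rw [← heq] at h2
  rw [div_lt_div_iff₀ hpos hm1] at h2
  have hnat : (m - 1) * (t' + 1) < m + S := by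
    have hq : ((m - 1 : ℕ):ℚ) * ((t' + 1 : ℕ):ℚ) < (m:ℚ) + (S:ℚ) := by
      push_cast [Nat.cast_sub (by omega : 1 ≤ m)] at h2 ⊢
      nlinarith [h2]
    exact_mod_cast hq
  have hkey : (m - 1) * (t' + 1) = (m - 1) * t' + (m - 1) := Nat.mul_succ _ _
  have hkey2 : (t' + 1) * (m - 1) = (m - 1) * t' + (m - 1) := by
    rw [Nat.mul_comm]; exact Nat.mul_succ _ _
  have hle : (m - 1) * t' ≤ S := by omega
  refine ⟨t', S + 1 - (m - 1) * t', by omega, by omega, by omega, ?_⟩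
  have hb : ((S + 1 - (m - 1) * t' : ℕ) : ℚ) = (S:ℚ) + 1 - ((m:ℚ) - 1) * t' := by
    push_cast [Nat.cast_sub (by omega : (m - 1) * t' ≤ S + 1),
      Nat.cast_sub (by omega : 1 ≤ m)]
    ring
  rw [← heq, hb]
  have ht' : (t' : ℚ) ≠ 0 := by
    have : 1 ≤ t' := by omega
    positivity
  have ht'pos : (0:ℚ) < t' := by
    have : (1:ℕ) ≤ t' := by omega
    exact_mod_cast Nat.pos_of_ne_zero (by omega)
  have hden : ((m:ℚ) - 1) + ((S:ℚ) + 1 - ((m:ℚ) - 1) * t') / t' ≠ 0 := by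
    have he : ((m:ℚ) - 1) + ((S:ℚ) + 1 - ((m:ℚ) - 1) * t') / t' = ((S:ℚ) + 1) / t' := by
      field_simp
      ring
    rw [he]
    positivity
  field_simp
  push_cast
  ring
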